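/- For any number of terms R ≥ 1, there do not exist positive integers x_1, ..., x_R, each of the form 2^a · 11^b with a, b ≥ 0, such that ∑_{i=1}^R 1/x_i = 1, R = 5, and at least one x_i is divisible by 2 and at least one x_i is divisible by 11. -/

import Mathlib

private lemma invle11 {y : ℕ} (hy : 0 < y) (h11 : 11 ∣ y) : ((y:ℚ))⁻¹ ≤ 1/11 := by
  have h : (11:ℚ) ≤ (y:ℚ) := by exact_mod_cast Nat.le_of_dvd hy h11
  rw [show (1:ℚ)/11 = (11:ℚ)⁻¹ by norm_num]
  exact inv_anti₀ (by norm_num) h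

private lemma invposn {y : ℕ} (hy : 0 < y) : (0:ℚ) < ((y:ℚ))⁻¹ := by
  have : (0:ℚ) < (y:ℚ) := by exact_mod_cast hy
  exact inv_pos.mpr this

private lemma invanti {y z : ℕ} (hy : 0 < y) (hyz : y ≤ z) : ((z:ℚ))⁻¹ ≤ ((y:ℚ))⁻¹ := by
  have hyQ : (0:ℚ) < (y:ℚ) := by exact_mod_cast hy
  exact inv_anti₀ hyQ (by exact_mod_cast hyz)

private lemma dy (a : ℕ) : (((2^a:ℕ)):ℚ)⁻¹ = 1 ∨ (((2^a:ℕ)):ℚ)⁻¹ = 1/2 ∨ (((2^a:ℕ)):ℚ)⁻¹ = 1/4 ∨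
    (((2^a:ℕ)):ℚ)⁻¹ = 1/8 ∨ (((2^a:ℕ)):ℚ)⁻¹ = 1/16 ∨ (((2^a:ℕ)):ℚ)⁻¹ ≤ 1/32 := by
  match a with
  | 0 => left; norm_num
  | 1 => right; left; norm_num
  | 2 => right; right; left; norm_num
  | 3 => right; right; right; left; norm_num
  | 4 => right; right; right; right; left; norm_num
  | (n+5) =>
    right; right; right; right; right
    have h32 : (32:ℚ) ≤ ((2^(n+5):ℕ):ℚ) := by
      push_cast
      calc (32:ℚ) = 2^5 := by norm_num
      _ ≤ 2^(n+5) := by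
        apply pow_le_pow_right₀ (by norm_num)
        omega
    rw [show (1:ℚ)/32 = (32:ℚ)⁻¹ by norm_num]
    exact inv_anti₀ (by norm_num) h32

private lemma dypos (a : ℕ) : (0:ℚ) < (((2^a:ℕ)):ℚ)⁻¹ :=
  invposn (Nat.pow_pos (by norm_num))

private lemma castle {y : ℕ} {c : ℚ} (hy : 0 < y) (hc : 0 < c) (h : c⁻¹ ≤ ((y:ℚ))⁻¹) :
    (y:ℚ) ≤ c := by
  have hyQ : (0:ℚ) < (y:ℚ) := by exact_mod_cast hy
  have h2 := inv_anti₀ (inv_pos.mpr hc) h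
  rwa [inv_inv, inv_inv] at h2

private lemma pair18 (y z : ℕ) (hy : 0 < y) (hz : 0 < z) (h11y : 11 ∣ y) (h11z : 11 ∣ z)
    (h : ((y:ℚ))⁻¹ + ((z:ℚ))⁻¹ = 1/8) : False := by
  wlog hyz : y ≤ z generalizing y z
  · exact this z y hz hy h11z h11y (by linarith) (le_of_not_ge hyz)
  have hmono := invanti hy hyz
  have h16 : (16:ℚ)⁻¹ ≤ ((y:ℚ))⁻¹ := by
    rw [show (16:ℚ)⁻¹ = 1/16 by norm_num]; linarith
  have hy16 : (y:ℚ) ≤ 16 := castle hy (by norm_num) h16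
  have : y ≤ 16 := by exact_mod_cast hy16
  have hy11 : y = 11 := by omega
  subst hy11
  have e11 : (((11:ℕ)):ℚ)⁻¹ = 1/11 := by norm_num
  rw [e11] at h
  have hz3 : ((z:ℚ))⁻¹ = 3/88 := by linarith
  rw [inv_eq_iff_eq_inv] at hz3
  norm_num at hz3
  have h3 : (z:ℚ)*3 = 88 := by rw [hz3]; norm_num
  have h4 : z*3 = 88 := by exact_mod_cast h3
  omega

private lemma pair744 (y z : ℕ) (hy : 0 < y) (hz : 0 < z) (h11y : 11 ∣ y) (h11z : 11 ∣ z)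
    (h : ((y:ℚ))⁻¹ + ((z:ℚ))⁻¹ = 7/44) : False := by
  wlog hyz : y ≤ z generalizing y z
  · exact this z y hz hy h11z h11y (by linarith) (le_of_not_ge hyz)
  have hmono := invanti hy hyz
  have h16 : ((88:ℚ)/7)⁻¹ ≤ ((y:ℚ))⁻¹ := by
    rw [show ((88:ℚ)/7)⁻¹ = 7/88 by norm_num]; linarith
  have hy16 : (y:ℚ) ≤ 88/7 := castle hy (by norm_num) h16
  have hlt : (y:ℚ) < 13 := by linarith
  have : y < 13 := by exact_mod_cast hlt
  have hy11 : y = 11 := by omega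
  subst hy11
  have e11 : (((11:ℕ)):ℚ)⁻¹ = 1/11 := by norm_num
  rw [e11] at h
  have hz3 : ((z:ℚ))⁻¹ = 3/44 := by linarith
  rw [inv_eq_iff_eq_inv] at hz3
  norm_num at hz3
  have h3 : (z:ℚ)*3 = 44 := by rw [hz3]; norm_num
  have h4 : z*3 = 44 := by exact_mod_cast h3
  omega

private lemma triple14' (y z w : ℕ) (hy : 0 < y) (hz : 0 < z) (hw : 0 < w)
    (h11y : 11 ∣ y) (h11z : 11 ∣ z) (h11w : 11 ∣ w) (hyz : y ≤ z) (hyw : y ≤ w)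
    (h : ((y:ℚ))⁻¹ + ((z:ℚ))⁻¹ + ((w:ℚ))⁻¹ = 1/4) : False := by
  have m1 := invanti hy hyz
  have m2 := invanti hy hyw
  have h12 : (12:ℚ)⁻¹ ≤ ((y:ℚ))⁻¹ := by
    rw [show (12:ℚ)⁻¹ = 1/12 by norm_num]; linarith
  have hy12 : (y:ℚ) ≤ 12 := castle hy (by norm_num) h12
  have : y ≤ 12 := by exact_mod_cast hy12
  have hy11 : y = 11 := by omega
  subst hy11
  have e11 : (((11:ℕ)):ℚ)⁻¹ = 1/11 := by norm_num
  rw [e11] at h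
  exact pair744 z w hz hw h11z h11w (by linarith)

private lemma triple14 (y z w : ℕ) (hy : 0 < y) (hz : 0 < z) (hw : 0 < w)
    (h11y : 11 ∣ y) (h11z : 11 ∣ z) (h11w : 11 ∣ w)
    (h : ((y:ℚ))⁻¹ + ((z:ℚ))⁻¹ + ((w:ℚ))⁻¹ = 1/4) : False := by
  rcases le_total y z with h1|h1 <;> rcases le_total y w with h2|h2 <;> rcases le_total z w with h3|h3
  · exact triple14' y z w hy hz hw h11y h11z h11w (by omega) (by omega) (by linarith)
  · exact triple14' y z w hy hz hw h11y h11z h11w (by omega) (by omega) (by linarith)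
  · exact triple14' w y z hw hy hz h11w h11y h11z (by omega) (by omega) (by linarith)
  · exact triple14' w y z hw hy hz h11w h11y h11z (by omega) (by omega) (by linarith)
  · exact triple14' z y w hz hy hw h11z h11y h11w (by omega) (by omega) (by linarith)
  · exact triple14' z y w hz hy hw h11z h11y h11w (by omega) (by omega) (by linarith)
  · exact triple14' z y w hz hy hw h11z h11y h11w (by omega) (by omega) (by linarith)
  · exact triple14' w y z hw hy hz h11w h11y h11z (by omega) (by omega) (by linarith)

private lemma k5 (y1 y2 y3 y4 y5 : ℕ) (p1 : 0 < y1) (p2 : 0 < y2) (p3 : 0 < y3)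
    (p4 : 0 < y4) (p5 : 0 < y5)
    (d1 : 11 ∣ y1) (d2 : 11 ∣ y2) (d3 : 11 ∣ y3) (d4 : 11 ∣ y4) (d5 : 11 ∣ y5)
    (h : ((y1:ℚ))⁻¹ + ((y2:ℚ))⁻¹ + ((y3:ℚ))⁻¹ + ((y4:ℚ))⁻¹ + ((y5:ℚ))⁻¹ = 1) : False := by
  have := invle11 p1 d1; have := invle11 p2 d2; have := invle11 p3 d3
  have := invle11 p4 d4; have := invle11 p5 d5
  linarith

private lemma k4 (a : ℕ) (y1 y2 y3 y4 : ℕ) (p1 : 0 < y1) (p2 : 0 < y2) (p3 : 0 < y3)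
    (p4 : 0 < y4)
    (d1 : 11 ∣ y1) (d2 : 11 ∣ y2) (d3 : 11 ∣ y3) (d4 : 11 ∣ y4)
    (h : (((2^a:ℕ)):ℚ)⁻¹ + ((y1:ℚ))⁻¹ + ((y2:ℚ))⁻¹ + ((y3:ℚ))⁻¹ + ((y4:ℚ))⁻¹ = 1) : False := by
  have := invle11 p1 d1; have := invle11 p2 d2; have := invle11 p3 d3
  have := invle11 p4 d4
  have := invposn p1; have := invposn p2; have := invposn p3; have := invposn p4
  have := dypos a
  rcases dy a with h'|h'|h'|h'|h'|h' <;> linarith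

private lemma dyle1 (a : ℕ) : (((2^a:ℕ)):ℚ)⁻¹ ≤ 1 := by
  rcases dy a with h|h|h|h|h|h <;> linarith

set_option maxHeartbeats 2000000 in
private lemma k3 (a b : ℕ) (y1 y2 y3 : ℕ) (p1 : 0 < y1) (p2 : 0 < y2) (p3 : 0 < y3)
    (d1 : 11 ∣ y1) (d2 : 11 ∣ y2) (d3 : 11 ∣ y3)
    (h : (((2^a:ℕ)):ℚ)⁻¹ + (((2^b:ℕ)):ℚ)⁻¹ + ((y1:ℚ))⁻¹ + ((y2:ℚ))⁻¹ + ((y3:ℚ))⁻¹ = 1) :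
    False := by
  have := invle11 p1 d1; have := invle11 p2 d2; have := invle11 p3 d3
  have := invposn p1; have := invposn p2; have := invposn p3
  have := dypos a; have := dypos b
  have := dyle1 a; have := dyle1 b
  rcases dy a with ha|ha|ha|ha|ha|ha
  · linarith
  · rcases dy b with hb|hb|hb|hb|hb|hb
    · linarith
    · linarith
    · exact triple14 y1 y2 y3 p1 p2 p3 d1 d2 d3 (by linarith)
    · linarith
    · linarith
    · linarith
  · rcases dy b with hb|hb|hb|hb|hb|hb
    · linarith
    · exact triple14 y1 y2 y3 p1 p2 p3 d1 d2 d3 (by linarith)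
    · linarith
    · linarith
    · linarith
    · linarith
  · rcases dy b with hb|hb|hb|hb|hb|hb
    · linarith
    · linarith
    · linarith
    · linarith
    · linarith
    · linarith
  · rcases dy b with hb|hb|hb|hb|hb|hb
    · linarith
    · linarith
    · linarith
    · linarith
    · linarith
    · linarith
  · rcases dy b with hb|hb|hb|hb|hb|hb
    · linarith
    · linarith
    · linarith
    · linarith
    · linarith
    · linarith

set_option maxHeartbeats 2000000 in
private lemma k2 (a b c : ℕ) (y1 y2 : ℕ) (p1 : 0 < y1) (p2 : 0 < y2)
    (d1 : 11 ∣ y1) (d2 : 11 ∣ y2)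
    (h : (((2^a:ℕ)):ℚ)⁻¹ + (((2^b:ℕ)):ℚ)⁻¹ + (((2^c:ℕ)):ℚ)⁻¹ + ((y1:ℚ))⁻¹ + ((y2:ℚ))⁻¹ = 1) :
    False := by
  have := invle11 p1 d1; have := invle11 p2 d2
  have := invposn p1; have := invposn p2
  have := dypos a; have := dypos b; have := dypos c
  have := dyle1 a; have := dyle1 b; have := dyle1 c
  rcases dy a with ha|ha|ha|ha|ha|ha
  · linarith
  · rcases dy b with hb|hb|hb|hb|hb|hb
    · linarith
    · linarith
    · rcases dy c with hc|hc|hc|hc|hc|hc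
      · linarith
      · linarith
      · linarith
      · exact pair18 y1 y2 p1 p2 d1 d2 (by linarith)
      · linarith
      · linarith
    · rcases dy c with hc|hc|hc|hc|hc|hc
      · linarith
      · linarith
      · exact pair18 y1 y2 p1 p2 d1 d2 (by linarith)
      · linarith
      · linarith
      · linarith
    · rcases dy c with hc|hc|hc|hc|hc|hc
      · linarith
      · linarith
      · linarith
      · linarith
      · linarith
      · linarith
    · rcases dy c with hc|hc|hc|hc|hc|hc
      · linarith
      · linarith
      · linarith
      · linarith
      · linarith
      · linarith
  · rcases dy b with hb|hb|hb|hb|hb|hb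
    · linarith
    · rcases dy c with hc|hc|hc|hc|hc|hc
      · linarith
      · linarith
      · linarith
      · exact pair18 y1 y2 p1 p2 d1 d2 (by linarith)
      · linarith
      · linarith
    · rcases dy c with hc|hc|hc|hc|hc|hc
      · linarith
      · linarith
      · linarith
      · linarith
      · linarith
      · linarith
    · rcases dy c with hc|hc|hc|hc|hc|hc
      · linarith
      · exact pair18 y1 y2 p1 p2 d1 d2 (by linarith)
      · linarith
      · linarith
      · linarith
      · linarith
    · rcases dy c with hc|hc|hc|hc|hc|hc
      · linarith
      · linarith
      · linarith
      · linarith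
      · linarith
      · linarith
    · rcases dy c with hc|hc|hc|hc|hc|hc
      · linarith
      · linarith
      · linarith
      · linarith
      · linarith
      · linarith
  · rcases dy b with hb|hb|hb|hb|hb|hb
    · linarith
    · rcases dy c with hc|hc|hc|hc|hc|hc
      · linarith
      · linarith
      · exact pair18 y1 y2 p1 p2 d1 d2 (by linarith)
      · linarith
      · linarith
      · linarith
    · rcases dy c with hc|hc|hc|hc|hc|hc
      · linarith
      · exact pair18 y1 y2 p1 p2 d1 d2 (by linarith)
      · linarith
      · linarith
      · linarith
      · linarith
    · rcases dy c with hc|hc|hc|hc|hc|hc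
      · linarith
      · linarith
      · linarith
      · linarith
      · linarith
      · linarith
    · rcases dy c with hc|hc|hc|hc|hc|hc
      · linarith
      · linarith
      · linarith
      · linarith
      · linarith
      · linarith
    · rcases dy c with hc|hc|hc|hc|hc|hc
      · linarith
      · linarith
      · linarith
      · linarith
      · linarith
      · linarith
  · rcases dy b with hb|hb|hb|hb|hb|hb
    · linarith
    · rcases dy c with hc|hc|hc|hc|hc|hc
      · linarith
      · linarith
      · linarith
      · linarith
      · linarith
      · linarith
    · rcases dy c with hc|hc|hc|hc|hc|hc
      · linarith
      · linarith
      · linarith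
      · linarith
      · linarith
      · linarith
    · rcases dy c with hc|hc|hc|hc|hc|hc
      · linarith
      · linarith
      · linarith
      · linarith
      · linarith
      · linarith
    · rcases dy c with hc|hc|hc|hc|hc|hc
      · linarith
      · linarith
      · linarith
      · linarith
      · linarith
      · linarith
    · rcases dy c with hc|hc|hc|hc|hc|hc
      · linarith
      · linarith
      · linarith
      · linarith
      · linarith
      · linarith
  · rcases dy b with hb|hb|hb|hb|hb|hb
    · linarith
    · rcases dy c with hc|hc|hc|hc|hc|hc
      · linarith
      · linarith
      · linarith
      · linarith
      · linarith
      · linarith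
    · rcases dy c with hc|hc|hc|hc|hc|hc
      · linarith
      · linarith
      · linarith
      · linarith
      · linarith
      · linarith
    · rcases dy c with hc|hc|hc|hc|hc|hc
      · linarith
      · linarith
      · linarith
      · linarith
      · linarith
      · linarith
    · rcases dy c with hc|hc|hc|hc|hc|hc
      · linarith
      · linarith
      · linarith
      · linarith
      · linarith
      · linarith
    · rcases dy c with hc|hc|hc|hc|hc|hc
      · linarith
      · linarith
      · linarith
      · linarith
      · linarith
      · linarith

private lemma k1 (a b c d : ℕ) (y1 : ℕ) (p1 : 0 < y1) (d1 : 11 ∣ y1)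
    (h : (((2^a:ℕ)):ℚ)⁻¹ + (((2^b:ℕ)):ℚ)⁻¹ + (((2^c:ℕ)):ℚ)⁻¹ + (((2^d:ℕ)):ℚ)⁻¹ +
      ((y1:ℚ))⁻¹ = 1) : False := by
  have hy : (0:ℚ) < (y1:ℚ) := by exact_mod_cast p1
  push_cast at h
  have ha : ((2:ℚ))^a ≠ 0 := by positivity
  have hb : ((2:ℚ))^b ≠ 0 := by positivity
  have hc : ((2:ℚ))^c ≠ 0 := by positivity
  have hd : ((2:ℚ))^d ≠ 0 := by positivity
  field_simp at h
  have hN : (((2^b+2^a)*2^c + 2^a*2^b)*2^d + 2^a*2^b*2^c) * y1 + 2^a*2^b*2^c*2^d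
      = 2^a*2^b*2^c*2^d*y1 := by exact_mod_cast h
  have hdvd : y1 ∣ 2^a*2^b*2^c*2^d := by
    refine (Int.natCast_dvd_natCast).mp ?_
    refine ⟨(2^a*2^b*2^c*2^d : ℤ) -
      ((((2:ℤ)^b+2^a)*2^c + 2^a*2^b)*2^d + 2^a*2^b*2^c), ?_⟩
    have hZ : ((((2:ℤ)^b+2^a)*2^c + 2^a*2^b)*2^d + 2^a*2^b*2^c) * y1 + 2^a*2^b*2^c*2^d
        = 2^a*2^b*2^c*2^d*y1 := by exact_mod_cast hN
    push_cast
    linear_combination hZ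
  have h2 : (11:ℕ) ∣ 2^(a+b+c+d) := by
    have h3 := dvd_trans d1 hdvd
    rwa [show 2^a*2^b*2^c*2^d = 2^(a+b+c+d) by ring] at h3
  have h4 := Nat.Prime.dvd_of_dvd_pow (p := 11) (by norm_num) h2
  norm_num at h4

private lemma expow2 {n : ℕ} (h : ∃ a b : ℕ, n = 2^a*11^b) (hnd : ¬ 11 ∣ n) :
    ∃ a, n = 2^a := by
  obtain ⟨a, b, hab⟩ := h
  have hb : b = 0 := by
    by_contra hb
    exact hnd (hab ▸ dvd_mul_of_dvd_right (dvd_pow_self 11 hb) _)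
  exact ⟨a, by rw [hab, hb, pow_zero, mul_one]⟩

theorem stmt_7 : ¬ ∃ (R : ℕ) (x : Fin R → ℕ),
    1 ≤ R ∧ R = 5 ∧
    (∀ i, 0 < x i) ∧
    (∀ i, ∃ a b : ℕ, x i = 2 ^ a * 11 ^ b) ∧
    (∑ i, ((x i : ℚ))⁻¹ = 1) ∧
    (∃ i, 2 ∣ x i) ∧ (∃ i, 11 ∣ x i) := by
  rintro ⟨R, x, -, rfl, hpos, hsm, hsum, -, j, hj⟩
  rw [Fin.sum_univ_five] at hsum
  by_cases h0 : 11 ∣ x 0 <;> by_cases h1 : 11 ∣ x 1 <;> by_cases h2 : 11 ∣ x 2 <;>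
    by_cases h3 : 11 ∣ x 3 <;> by_cases h4 : 11 ∣ x 4
  · exact k5 (x 0) (x 1) (x 2) (x 3) (x 4) (hpos 0) (hpos 1) (hpos 2) (hpos 3) (hpos 4) h0 h1 h2 h3 h4 (by linarith [hsum])
  · obtain ⟨a4, e4⟩ := expow2 (hsm 4) h4
    rw [e4] at hsum
    exact k4 a4 (x 0) (x 1) (x 2) (x 3) (hpos 0) (hpos 1) (hpos 2) (hpos 3) h0 h1 h2 h3 (by linarith [hsum])
  · obtain ⟨a3, e3⟩ := expow2 (hsm 3) h3
    rw [e3] at hsum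
    exact k4 a3 (x 0) (x 1) (x 2) (x 4) (hpos 0) (hpos 1) (hpos 2) (hpos 4) h0 h1 h2 h4 (by linarith [hsum])
  · obtain ⟨a3, e3⟩ := expow2 (hsm 3) h3
    obtain ⟨a4, e4⟩ := expow2 (hsm 4) h4
    rw [e3, e4] at hsum
    exact k3 a3 a4 (x 0) (x 1) (x 2) (hpos 0) (hpos 1) (hpos 2) h0 h1 h2 (by linarith [hsum])
  · obtain ⟨a2, e2⟩ := expow2 (hsm 2) h2
    rw [e2] at hsum
    exact k4 a2 (x 0) (x 1) (x 3) (x 4) (hpos 0) (hpos 1) (hpos 3) (hpos 4) h0 h1 h3 h4 (by linarith [hsum])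
  · obtain ⟨a2, e2⟩ := expow2 (hsm 2) h2
    obtain ⟨a4, e4⟩ := expow2 (hsm 4) h4
    rw [e2, e4] at hsum
    exact k3 a2 a4 (x 0) (x 1) (x 3) (hpos 0) (hpos 1) (hpos 3) h0 h1 h3 (by linarith [hsum])
  · obtain ⟨a2, e2⟩ := expow2 (hsm 2) h2
    obtain ⟨a3, e3⟩ := expow2 (hsm 3) h3
    rw [e2, e3] at hsum
    exact k3 a2 a3 (x 0) (x 1) (x 4) (hpos 0) (hpos 1) (hpos 4) h0 h1 h4 (by linarith [hsum])
  · obtain ⟨a2, e2⟩ := expow2 (hsm 2) h2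
    obtain ⟨a3, e3⟩ := expow2 (hsm 3) h3
    obtain ⟨a4, e4⟩ := expow2 (hsm 4) h4
    rw [e2, e3, e4] at hsum
    exact k2 a2 a3 a4 (x 0) (x 1) (hpos 0) (hpos 1) h0 h1 (by linarith [hsum])
  · obtain ⟨a1, e1⟩ := expow2 (hsm 1) h1
    rw [e1] at hsum
    exact k4 a1 (x 0) (x 2) (x 3) (x 4) (hpos 0) (hpos 2) (hpos 3) (hpos 4) h0 h2 h3 h4 (by linarith [hsum])
  · obtain ⟨a1, e1⟩ := expow2 (hsm 1) h1
    obtain ⟨a4, e4⟩ := expow2 (hsm 4) h4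
    rw [e1, e4] at hsum
    exact k3 a1 a4 (x 0) (x 2) (x 3) (hpos 0) (hpos 2) (hpos 3) h0 h2 h3 (by linarith [hsum])
  · obtain ⟨a1, e1⟩ := expow2 (hsm 1) h1
    obtain ⟨a3, e3⟩ := expow2 (hsm 3) h3
    rw [e1, e3] at hsum
    exact k3 a1 a3 (x 0) (x 2) (x 4) (hpos 0) (hpos 2) (hpos 4) h0 h2 h4 (by linarith [hsum])
  · obtain ⟨a1, e1⟩ := expow2 (hsm 1) h1
    obtain ⟨a3, e3⟩ := expow2 (hsm 3) h3
    obtain ⟨a4, e4⟩ := expow2 (hsm 4) h4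
    rw [e1, e3, e4] at hsum
    exact k2 a1 a3 a4 (x 0) (x 2) (hpos 0) (hpos 2) h0 h2 (by linarith [hsum])
  · obtain ⟨a1, e1⟩ := expow2 (hsm 1) h1
    obtain ⟨a2, e2⟩ := expow2 (hsm 2) h2
    rw [e1, e2] at hsum
    exact k3 a1 a2 (x 0) (x 3) (x 4) (hpos 0) (hpos 3) (hpos 4) h0 h3 h4 (by linarith [hsum])
  · obtain ⟨a1, e1⟩ := expow2 (hsm 1) h1
    obtain ⟨a2, e2⟩ := expow2 (hsm 2) h2
    obtain ⟨a4, e4⟩ := expow2 (hsm 4) h4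
    rw [e1, e2, e4] at hsum
    exact k2 a1 a2 a4 (x 0) (x 3) (hpos 0) (hpos 3) h0 h3 (by linarith [hsum])
  · obtain ⟨a1, e1⟩ := expow2 (hsm 1) h1
    obtain ⟨a2, e2⟩ := expow2 (hsm 2) h2
    obtain ⟨a3, e3⟩ := expow2 (hsm 3) h3
    rw [e1, e2, e3] at hsum
    exact k2 a1 a2 a3 (x 0) (x 4) (hpos 0) (hpos 4) h0 h4 (by linarith [hsum])
  · obtain ⟨a1, e1⟩ := expow2 (hsm 1) h1
    obtain ⟨a2, e2⟩ := expow2 (hsm 2) h2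
    obtain ⟨a3, e3⟩ := expow2 (hsm 3) h3
    obtain ⟨a4, e4⟩ := expow2 (hsm 4) h4
    rw [e1, e2, e3, e4] at hsum
    exact k1 a1 a2 a3 a4 (x 0) (hpos 0) h0 (by linarith [hsum])
  · obtain ⟨a0, e0⟩ := expow2 (hsm 0) h0
    rw [e0] at hsum
    exact k4 a0 (x 1) (x 2) (x 3) (x 4) (hpos 1) (hpos 2) (hpos 3) (hpos 4) h1 h2 h3 h4 (by linarith [hsum])
  · obtain ⟨a0, e0⟩ := expow2 (hsm 0) h0
    obtain ⟨a4, e4⟩ := expow2 (hsm 4) h4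
    rw [e0, e4] at hsum
    exact k3 a0 a4 (x 1) (x 2) (x 3) (hpos 1) (hpos 2) (hpos 3) h1 h2 h3 (by linarith [hsum])
  · obtain ⟨a0, e0⟩ := expow2 (hsm 0) h0
    obtain ⟨a3, e3⟩ := expow2 (hsm 3) h3
    rw [e0, e3] at hsum
    exact k3 a0 a3 (x 1) (x 2) (x 4) (hpos 1) (hpos 2) (hpos 4) h1 h2 h4 (by linarith [hsum])
  · obtain ⟨a0, e0⟩ := expow2 (hsm 0) h0
    obtain ⟨a3, e3⟩ := expow2 (hsm 3) h3
    obtain ⟨a4, e4⟩ := expow2 (hsm 4) h4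
    rw [e0, e3, e4] at hsum
    exact k2 a0 a3 a4 (x 1) (x 2) (hpos 1) (hpos 2) h1 h2 (by linarith [hsum])
  · obtain ⟨a0, e0⟩ := expow2 (hsm 0) h0
    obtain ⟨a2, e2⟩ := expow2 (hsm 2) h2
    rw [e0, e2] at hsum
    exact k3 a0 a2 (x 1) (x 3) (x 4) (hpos 1) (hpos 3) (hpos 4) h1 h3 h4 (by linarith [hsum])
  · obtain ⟨a0, e0⟩ := expow2 (hsm 0) h0
    obtain ⟨a2, e2⟩ := expow2 (hsm 2) h2
    obtain ⟨a4, e4⟩ := expow2 (hsm 4) h4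
    rw [e0, e2, e4] at hsum
    exact k2 a0 a2 a4 (x 1) (x 3) (hpos 1) (hpos 3) h1 h3 (by linarith [hsum])
  · obtain ⟨a0, e0⟩ := expow2 (hsm 0) h0
    obtain ⟨a2, e2⟩ := expow2 (hsm 2) h2
    obtain ⟨a3, e3⟩ := expow2 (hsm 3) h3
    rw [e0, e2, e3] at hsum
    exact k2 a0 a2 a3 (x 1) (x 4) (hpos 1) (hpos 4) h1 h4 (by linarith [hsum])
  · obtain ⟨a0, e0⟩ := expow2 (hsm 0) h0
    obtain ⟨a2, e2⟩ := expow2 (hsm 2) h2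
    obtain ⟨a3, e3⟩ := expow2 (hsm 3) h3
    obtain ⟨a4, e4⟩ := expow2 (hsm 4) h4
    rw [e0, e2, e3, e4] at hsum
    exact k1 a0 a2 a3 a4 (x 1) (hpos 1) h1 (by linarith [hsum])
  · obtain ⟨a0, e0⟩ := expow2 (hsm 0) h0
    obtain ⟨a1, e1⟩ := expow2 (hsm 1) h1
    rw [e0, e1] at hsum
    exact k3 a0 a1 (x 2) (x 3) (x 4) (hpos 2) (hpos 3) (hpos 4) h2 h3 h4 (by linarith [hsum])
  · obtain ⟨a0, e0⟩ := expow2 (hsm 0) h0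
    obtain ⟨a1, e1⟩ := expow2 (hsm 1) h1
    obtain ⟨a4, e4⟩ := expow2 (hsm 4) h4
    rw [e0, e1, e4] at hsum
    exact k2 a0 a1 a4 (x 2) (x 3) (hpos 2) (hpos 3) h2 h3 (by linarith [hsum])
  · obtain ⟨a0, e0⟩ := expow2 (hsm 0) h0
    obtain ⟨a1, e1⟩ := expow2 (hsm 1) h1
    obtain ⟨a3, e3⟩ := expow2 (hsm 3) h3
    rw [e0, e1, e3] at hsum
    exact k2 a0 a1 a3 (x 2) (x 4) (hpos 2) (hpos 4) h2 h4 (by linarith [hsum])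
  · obtain ⟨a0, e0⟩ := expow2 (hsm 0) h0
    obtain ⟨a1, e1⟩ := expow2 (hsm 1) h1
    obtain ⟨a3, e3⟩ := expow2 (hsm 3) h3
    obtain ⟨a4, e4⟩ := expow2 (hsm 4) h4
    rw [e0, e1, e3, e4] at hsum
    exact k1 a0 a1 a3 a4 (x 2) (hpos 2) h2 (by linarith [hsum])
  · obtain ⟨a0, e0⟩ := expow2 (hsm 0) h0
    obtain ⟨a1, e1⟩ := expow2 (hsm 1) h1
    obtain ⟨a2, e2⟩ := expow2 (hsm 2) h2
    rw [e0, e1, e2] at hsum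
    exact k2 a0 a1 a2 (x 3) (x 4) (hpos 3) (hpos 4) h3 h4 (by linarith [hsum])
  · obtain ⟨a0, e0⟩ := expow2 (hsm 0) h0
    obtain ⟨a1, e1⟩ := expow2 (hsm 1) h1
    obtain ⟨a2, e2⟩ := expow2 (hsm 2) h2
    obtain ⟨a4, e4⟩ := expow2 (hsm 4) h4
    rw [e0, e1, e2, e4] at hsum
    exact k1 a0 a1 a2 a4 (x 3) (hpos 3) h3 (by linarith [hsum])
  · obtain ⟨a0, e0⟩ := expow2 (hsm 0) h0
    obtain ⟨a1, e1⟩ := expow2 (hsm 1) h1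
    obtain ⟨a2, e2⟩ := expow2 (hsm 2) h2
    obtain ⟨a3, e3⟩ := expow2 (hsm 3) h3
    rw [e0, e1, e2, e3] at hsum
    exact k1 a0 a1 a2 a3 (x 4) (hpos 4) h4 (by linarith [hsum])
  · fin_cases j
    · exact h0 hj
    · exact h1 hj
    · exact h2 hj
    · exact h3 hj
    · exact h4 hj
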